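/- For every k ≥ 1, d̂ g_k − 2k·(g^sh_{1,k+1} + g^sh_{k+1,1} + g_{k+2} − g_1·g_{k+1}) lies in the ℚ-span of the series g^sh of weight at most k+1; concretely, k·g^{(1)}_{k+1} − 2k·( g_{1,k+1} + (1/2)(g^{(1)}_{k+1} − g_{k+1}) + g_{k+1,1} + g_{k+2} − g_1·g_{k+1} ) is a ℚ-linear combination of g_m with m ≤ k+1. -/

import Mathlib

open Finset PowerSeries

set_option maxHeartbeats 1600000

/-- The `q`-series `g^{(d)}_k(q) = Σ_{u,v ≥ 1} (u^d/d!)(v^{k-1}/(k-1)!) q^{uv}` as a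
formal power series: the coefficient of `q^n` is the (finite) sum over divisors. -/
noncomputable def gb (d k : ℕ) : PowerSeries ℚ :=
  PowerSeries.mk fun n =>
    ∑ u ∈ n.divisors,
      ((u : ℚ) ^ d / (Nat.factorial d : ℚ)) *
        (((n / u : ℕ) : ℚ) ^ (k - 1) / (Nat.factorial (k - 1) : ℚ))

/-- `g_k = g^{(0)}_k`. -/
noncomputable def g (k : ℕ) : PowerSeries ℚ := gb 0 k

/-- The depth-two series `g^{(d₁,d₂)}_{k₁,k₂}`. -/
noncomputable def gb2 (d1 d2 k1 k2 : ℕ) : PowerSeries ℚ :=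
  PowerSeries.mk fun n =>
    ∑ u1 ∈ Finset.range (n+1), ∑ u2 ∈ Finset.range (n+1),
    ∑ v1 ∈ Finset.range (n+1), ∑ v2 ∈ Finset.range (n+1),
      if 0 < u1 ∧ u1 < u2 ∧ 0 < v1 ∧ 0 < v2 ∧ u1 * v1 + u2 * v2 = n then
        ((u1 : ℚ) ^ d1 / (Nat.factorial d1 : ℚ)) *
        ((u2 : ℚ) ^ d2 / (Nat.factorial d2 : ℚ)) *
        ((v1 : ℚ) ^ (k1 - 1) / (Nat.factorial (k1 - 1) : ℚ)) *
        ((v2 : ℚ) ^ (k2 - 1) / (Nat.factorial (k2 - 1) : ℚ))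
      else 0

/-- `g_{k₁,k₂} = g^{(0,0)}_{k₁,k₂}`. -/
noncomputable def g2 (k1 k2 : ℕ) : PowerSeries ℚ := gb2 0 0 k1 k2

/-- The depth-three series `g^{(d₁,d₂,d₃)}_{k₁,k₂,k₃}`. -/
noncomputable def gb3 (d1 d2 d3 k1 k2 k3 : ℕ) : PowerSeries ℚ :=
  PowerSeries.mk fun n =>
    ∑ u1 ∈ Finset.range (n+1), ∑ u2 ∈ Finset.range (n+1), ∑ u3 ∈ Finset.range (n+1),
    ∑ v1 ∈ Finset.range (n+1), ∑ v2 ∈ Finset.range (n+1), ∑ v3 ∈ Finset.range (n+1),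
      if 0 < u1 ∧ u1 < u2 ∧ u2 < u3 ∧ 0 < v1 ∧ 0 < v2 ∧ 0 < v3 ∧
          u1 * v1 + u2 * v2 + u3 * v3 = n then
        ((u1 : ℚ) ^ d1 / (Nat.factorial d1 : ℚ)) *
        ((u2 : ℚ) ^ d2 / (Nat.factorial d2 : ℚ)) *
        ((u3 : ℚ) ^ d3 / (Nat.factorial d3 : ℚ)) *
        ((v1 : ℚ) ^ (k1 - 1) / (Nat.factorial (k1 - 1) : ℚ)) *
        ((v2 : ℚ) ^ (k2 - 1) / (Nat.factorial (k2 - 1) : ℚ)) *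
        ((v3 : ℚ) ^ (k3 - 1) / (Nat.factorial (k3 - 1) : ℚ))
      else 0

/-- `g_{k₁,k₂,k₃} = g^{(0,0,0)}_{k₁,k₂,k₃}`. -/
noncomputable def g3 (k1 k2 k3 : ℕ) : PowerSeries ℚ := gb3 0 0 0 k1 k2 k3

/-- The shuffle-regularized series `g^sh_{k₁,k₂}`. -/
noncomputable def gsh2 (k1 k2 : ℕ) : PowerSeries ℚ :=
  g2 k1 k2 + (if k1 = 1 then (1/2 : ℚ) else 0) • (gb 1 k2 - g k2)

/-- The shuffle-regularized series `g^sh_{k₁,k₂,k₃}`. -/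
noncomputable def gsh3 (k1 k2 k3 : ℕ) : PowerSeries ℚ :=
  g3 k1 k2 k3
    + (if k1 = 1 then (1/2 : ℚ) else 0) • (gb2 1 0 k2 k3 - g2 k2 k3)
    + (if k2 = 1 then (1/2 : ℚ) else 0) • (gb2 0 1 k1 k3 - gb2 1 0 k1 k3 - g2 k1 k3)
    + (if k1 * k2 = 1 then (1 : ℚ) else 0) •
        ((1/6 : ℚ) • gb 2 k3 - (1/4 : ℚ) • gb 1 k3 + (1/6 : ℚ) • g k3)

/-- The operator `d̂ = q·d/dq` on formal power series. -/
noncomputable def qd (f : PowerSeries ℚ) : PowerSeries ℚ :=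
  PowerSeries.mk fun n => (n : ℚ) * PowerSeries.coeff n f

/-! ### Auxiliary lemmas -/

lemma divsum (n a : ℕ) (ha : a ≤ n) (h : ℕ → ℕ → ℚ) :
    ∑ u ∈ a.divisors, h u (a / u) =
    ∑ u ∈ range (n+1), ∑ v ∈ range (n+1),
      if 0 < u ∧ 0 < v ∧ u * v = a then h u v else 0 := by
  rw [← Nat.sum_divisorsAntidiagonal h]
  rw [← Finset.sum_product']
  rw [Finset.sum_ite, Finset.sum_const_zero, add_zero]
  apply Finset.sum_nbij' (fun p => p) (fun p => p)
  · intro p hp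
    rw [Nat.mem_divisorsAntidiagonal] at hp
    obtain ⟨heq, hne⟩ := hp
    have h1 : 0 < p.1 := by
      rcases Nat.eq_zero_or_pos p.1 with h | h
      · exact absurd (by rw [← heq, h, zero_mul]) hne
      · exact h
    have h2 : 0 < p.2 := by
      rcases Nat.eq_zero_or_pos p.2 with h | h
      · exact absurd (by rw [← heq, h, mul_zero]) hne
      · exact h
    have hu : p.1 ≤ a := heq ▸ Nat.le_mul_of_pos_right p.1 h2
    have hv : p.2 ≤ a := heq ▸ Nat.le_mul_of_pos_left p.2 h1
    simp only [Finset.mem_filter, Finset.mem_product, Finset.mem_range]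
    exact ⟨⟨by omega, by omega⟩, h1, h2, heq⟩
  · intro p hp
    simp only [Finset.mem_filter] at hp
    rw [Nat.mem_divisorsAntidiagonal]
    obtain ⟨-, h1, h2, h3⟩ := hp
    exact ⟨h3, by rw [← h3]; exact Nat.mul_ne_zero (by omega) (by omega)⟩
  · intros; rfl
  · intros; rfl
  · intros; rfl

lemma coeff_g (m n : ℕ) :
    PowerSeries.coeff n (g m) =
      ∑ u ∈ n.divisors, ((n / u : ℕ) : ℚ) ^ (m - 1) / (Nat.factorial (m - 1) : ℚ) := by
  simp [g, gb, PowerSeries.coeff_mk]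

lemma coeff_mul_g (k n : ℕ) :
    PowerSeries.coeff n (g 1 * g (k + 1)) =
    ∑ u1 ∈ range (n+1), ∑ v1 ∈ range (n+1), ∑ u2 ∈ range (n+1), ∑ v2 ∈ range (n+1),
      if 0 < u1 ∧ 0 < v1 ∧ 0 < u2 ∧ 0 < v2 ∧ u1 * v1 + u2 * v2 = n then
        (v2 : ℚ) ^ k / (Nat.factorial k : ℚ) else 0 := by
  rw [PowerSeries.coeff_mul]
  have key : ∀ p ∈ Finset.HasAntidiagonal.antidiagonal n,
      PowerSeries.coeff p.1 (g 1) * PowerSeries.coeff p.2 (g (k+1)) =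
      ∑ u1 ∈ range (n+1), ∑ v1 ∈ range (n+1), ∑ u2 ∈ range (n+1), ∑ v2 ∈ range (n+1),
        if (0 < u1 ∧ 0 < v1 ∧ 0 < u2 ∧ 0 < v2) ∧ (u1 * v1 = p.1 ∧ u2 * v2 = p.2) then
          (v2 : ℚ) ^ k / (Nat.factorial k : ℚ) else 0 := by
    intro p hp
    rw [Finset.HasAntidiagonal.mem_antidiagonal] at hp
    rw [coeff_g, coeff_g]
    rw [divsum n p.1 (by omega) (fun u v => (v:ℚ)^(1-1)/(Nat.factorial (1-1) : ℚ)),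
        divsum n p.2 (by omega) (fun u v => (v:ℚ)^(k+1-1)/(Nat.factorial (k+1-1) : ℚ))]
    rw [Finset.sum_mul]
    refine Finset.sum_congr rfl fun u1 _ => ?_
    rw [Finset.sum_mul]
    refine Finset.sum_congr rfl fun v1 _ => ?_
    rw [Finset.mul_sum]
    refine Finset.sum_congr rfl fun u2 _ => ?_
    rw [Finset.mul_sum]
    refine Finset.sum_congr rfl fun v2 _ => ?_
    simp only [Nat.add_sub_cancel, pow_zero, Nat.factorial_zero]
    split_ifs with h1 h2 h3 h4 h5 <;> first | tauto | norm_num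
  rw [Finset.sum_congr rfl key]
  rw [Finset.sum_comm]
  refine Finset.sum_congr rfl fun u1 _ => ?_
  rw [Finset.sum_comm]
  refine Finset.sum_congr rfl fun v1 _ => ?_
  rw [Finset.sum_comm]
  refine Finset.sum_congr rfl fun u2 _ => ?_
  rw [Finset.sum_comm]
  refine Finset.sum_congr rfl fun v2 _ => ?_
  have : ∀ p : ℕ × ℕ,
      (if (0 < u1 ∧ 0 < v1 ∧ 0 < u2 ∧ 0 < v2) ∧ (u1 * v1 = p.1 ∧ u2 * v2 = p.2) then
          (v2 : ℚ) ^ k / (Nat.factorial k : ℚ) else 0) =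
      (if p = (u1 * v1, u2 * v2) then
        (if 0 < u1 ∧ 0 < v1 ∧ 0 < u2 ∧ 0 < v2 then (v2 : ℚ) ^ k / (Nat.factorial k : ℚ) else 0)
       else 0) := by
    intro p
    obtain ⟨a, b⟩ := p
    simp only [Prod.mk.injEq]
    by_cases h1 : u1 * v1 = a <;> by_cases h2 : u2 * v2 = b <;>
      split_ifs <;> first | rfl | tauto
  rw [Finset.sum_congr rfl (fun p _ => this p)]
  rw [Finset.sum_ite_eq' (Finset.HasAntidiagonal.antidiagonal n) (u1 * v1, u2 * v2)]
  simp only [Finset.HasAntidiagonal.mem_antidiagonal]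
  split_ifs <;> first | rfl | tauto

/-- splitting an `if` by trichotomy of `u1, u2` -/
lemma trisplit (u1 u2 : ℕ) (P1 P2 E : Prop) [Decidable P1] [Decidable P2] [Decidable E]
    (w : ℚ) :
    (if 0 < u1 ∧ P1 ∧ 0 < u2 ∧ P2 ∧ E then w else 0) =
    (if 0 < u1 ∧ u1 < u2 ∧ P1 ∧ P2 ∧ E then w else 0)
    + (if 0 < u2 ∧ u2 < u1 ∧ P1 ∧ P2 ∧ E then w else 0)
    + (if 0 < u1 ∧ u1 = u2 ∧ P1 ∧ P2 ∧ E then w else 0) := by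
  by_cases hP : P1 ∧ P2 ∧ E
  · obtain ⟨p1, p2, e⟩ := hP
    simp only [p1, p2, e, true_and, and_true]
    split_ifs <;> first | (exfalso; omega) | ring
  · split_ifs <;> first | (exfalso; tauto) | ring

/-- a 4-fold sum permutation: outer order `(a,b,c,d)` to `(c,a,d,b)`. -/
lemma sum4_perm (s : Finset ℕ) (f : ℕ → ℕ → ℕ → ℕ → ℚ) :
    (∑ a ∈ s, ∑ b ∈ s, ∑ c ∈ s, ∑ d ∈ s, f a b c d)
    = ∑ x1 ∈ s, ∑ x2 ∈ s, ∑ x3 ∈ s, ∑ x4 ∈ s, f x2 x4 x1 x3 := by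
  have s1 : (∑ a ∈ s, ∑ b ∈ s, ∑ c ∈ s, ∑ d ∈ s, f a b c d)
      = ∑ a ∈ s, ∑ c ∈ s, ∑ b ∈ s, ∑ d ∈ s, f a b c d :=
    Finset.sum_congr rfl fun a _ => Finset.sum_comm
  rw [s1, Finset.sum_comm]
  refine Finset.sum_congr rfl fun c _ => Finset.sum_congr rfl fun a _ => Finset.sum_comm

/-- a 4-fold sum permutation: swap middle two. -/
lemma sum4_perm2 (s : Finset ℕ) (f : ℕ → ℕ → ℕ → ℕ → ℚ) :
    (∑ a ∈ s, ∑ b ∈ s, ∑ c ∈ s, ∑ d ∈ s, f a b c d)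
    = ∑ x1 ∈ s, ∑ x2 ∈ s, ∑ x3 ∈ s, ∑ x4 ∈ s, f x1 x3 x2 x4 :=
  Finset.sum_congr rfl fun a _ => Finset.sum_comm

/-- The diagonal series. -/
noncomputable def Dser (k : ℕ) : PowerSeries ℚ :=
  PowerSeries.mk fun n =>
    ∑ u ∈ n.divisors, ∑ v ∈ range (n / u), (v : ℚ) ^ k / (Nat.factorial k : ℚ)

lemma diag_eq (k n : ℕ) (hk : 1 ≤ k) :
    (∑ u ∈ range (n+1), ∑ v1 ∈ range (n+1), ∑ v2 ∈ range (n+1),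
      if 0 < u ∧ 0 < v1 ∧ 0 < v2 ∧ u * v1 + u * v2 = n then
        (v2 : ℚ) ^ k / (Nat.factorial k : ℚ) else 0)
    = ∑ u ∈ n.divisors, ∑ v ∈ range (n / u), (v : ℚ) ^ k / (Nat.factorial k : ℚ) := by
  have hdiv : n.divisors = (range (n+1)).filter (fun u => u ∣ n ∧ n ≠ 0) := by
    ext u
    simp only [Nat.mem_divisors, Finset.mem_filter, Finset.mem_range]
    constructor
    · rintro ⟨h1, h2⟩
      exact ⟨by have := Nat.le_of_dvd (Nat.pos_of_ne_zero h2) h1; omega, h1, h2⟩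
    · tauto
  rw [hdiv, Finset.sum_filter]
  refine Finset.sum_congr rfl fun u hu => ?_
  rw [Finset.mem_range] at hu
  by_cases hq : u ∣ n ∧ n ≠ 0
  · rw [if_pos hq]
    obtain ⟨hdvd, hne⟩ := hq
    have hupos : 0 < u := by
      rcases Nat.eq_zero_or_pos u with h | h
      · subst h; exact absurd (Nat.eq_zero_of_zero_dvd hdvd) hne
      · exact h
    set w := n / u with hw
    have hnw : n = u * w := (Nat.mul_div_cancel' hdvd).symm
    have hwle : w ≤ n := Nat.div_le_self n u
    -- collapse the v1 sum
    have step1 : ∀ v2 ∈ range (n+1),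
        (∑ v1 ∈ range (n+1), if 0 < u ∧ 0 < v1 ∧ 0 < v2 ∧ u * v1 + u * v2 = n then
            (v2 : ℚ) ^ k / (Nat.factorial k : ℚ) else 0)
        = if 0 < v2 ∧ v2 < w then (v2 : ℚ) ^ k / (Nat.factorial k : ℚ) else 0 := by
      intro v2 _
      have hpt : ∀ v1, (if 0 < u ∧ 0 < v1 ∧ 0 < v2 ∧ u * v1 + u * v2 = n then
            (v2 : ℚ) ^ k / (Nat.factorial k : ℚ) else 0)
          = if v1 = w - v2 then
              (if 0 < v2 ∧ v2 < w then (v2 : ℚ) ^ k / (Nat.factorial k : ℚ) else 0) else 0 := by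
        intro v1
        have harith : (0 < u ∧ 0 < v1 ∧ 0 < v2 ∧ u * v1 + u * v2 = n)
            ↔ (v1 = w - v2 ∧ (0 < v2 ∧ v2 < w)) := by
          rw [hnw]
          constructor
          · rintro ⟨h1, h2, h3, h4⟩
            rw [← Nat.mul_add] at h4
            have := Nat.eq_of_mul_eq_mul_left h1 h4
            omega
          · rintro ⟨h1, h2, h3⟩
            refine ⟨hupos, by omega, h2, ?_⟩
            rw [← Nat.mul_add]
            congr 1
            omega
        rw [if_congr harith rfl rfl]
        split_ifs <;> first | rfl | tauto
      rw [Finset.sum_congr rfl fun v1 _ => hpt v1]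
      rw [Finset.sum_ite_eq' (range (n+1)) (w - v2)]
      rw [if_pos (Finset.mem_range.mpr (by omega))]
    -- now the v2 sum
    rw [Finset.sum_comm]
    rw [Finset.sum_congr rfl step1]
    rw [← Finset.sum_subset (Finset.range_subset_range.mpr (show w ≤ n + 1 by omega))
        (fun x _ hx => by
          rw [Finset.mem_range, not_lt] at hx
          rw [if_neg]; omega)]
    refine Finset.sum_congr rfl fun v hv => ?_
    rw [Finset.mem_range] at hv
    rcases Nat.eq_zero_or_pos v with h | h
    · subst h
      rw [if_neg (by omega)]
      rw [Nat.cast_zero, zero_pow (by omega), zero_div]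
    · rw [if_pos ⟨h, hv⟩]
  · rw [if_neg hq]
    refine Finset.sum_eq_zero fun v1 _ => Finset.sum_eq_zero fun v2 _ => ?_
    rw [if_neg]
    rintro ⟨h1, h2, h3, h4⟩
    rw [← Nat.mul_add] at h4
    exact hq ⟨Dvd.intro _ h4, by rw [← h4]; exact Nat.mul_ne_zero (by omega) (by omega)⟩

/-- key decomposition: `g 1 * g (k+1) = g2 1 (k+1) + g2 (k+1) 1 + Dser k`. -/
lemma mul_g_decomp (k : ℕ) (hk : 1 ≤ k) :
    g 1 * g (k + 1) = g2 1 (k + 1) + g2 (k + 1) 1 + Dser k := by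
  ext n
  rw [map_add, map_add, coeff_mul_g]
  have hA : PowerSeries.coeff n (g2 1 (k+1)) =
      ∑ u1 ∈ range (n+1), ∑ v1 ∈ range (n+1), ∑ u2 ∈ range (n+1), ∑ v2 ∈ range (n+1),
        if 0 < u1 ∧ u1 < u2 ∧ 0 < v1 ∧ 0 < v2 ∧ u1 * v1 + u2 * v2 = n then
          (v2 : ℚ) ^ k / (Nat.factorial k : ℚ) else 0 := by
    rw [g2, gb2, PowerSeries.coeff_mk]
    rw [sum4_perm2 (range (n+1)) (fun u1 v1 u2 v2 =>
      if 0 < u1 ∧ u1 < u2 ∧ 0 < v1 ∧ 0 < v2 ∧ u1 * v1 + u2 * v2 = n then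
        (v2 : ℚ) ^ k / (Nat.factorial k : ℚ) else 0)]
    refine Finset.sum_congr rfl fun u1 _ => Finset.sum_congr rfl fun u2 _ =>
      Finset.sum_congr rfl fun v1 _ => Finset.sum_congr rfl fun v2 _ => ?_
    simp only [Nat.add_sub_cancel, Nat.sub_self, pow_zero, Nat.factorial_zero, Nat.cast_one,
      div_one, one_mul]
  have hB : PowerSeries.coeff n (g2 (k+1) 1) =
      ∑ u1 ∈ range (n+1), ∑ v1 ∈ range (n+1), ∑ u2 ∈ range (n+1), ∑ v2 ∈ range (n+1),
        if 0 < u2 ∧ u2 < u1 ∧ 0 < v1 ∧ 0 < v2 ∧ u1 * v1 + u2 * v2 = n then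
          (v2 : ℚ) ^ k / (Nat.factorial k : ℚ) else 0 := by
    rw [g2, gb2, PowerSeries.coeff_mk]
    rw [sum4_perm (range (n+1)) (fun u1 v1 u2 v2 =>
      if 0 < u2 ∧ u2 < u1 ∧ 0 < v1 ∧ 0 < v2 ∧ u1 * v1 + u2 * v2 = n then
        (v2 : ℚ) ^ k / (Nat.factorial k : ℚ) else 0)]
    refine Finset.sum_congr rfl fun x1 _ => Finset.sum_congr rfl fun x2 _ =>
      Finset.sum_congr rfl fun x3 _ => Finset.sum_congr rfl fun x4 _ => ?_
    simp only [Nat.add_sub_cancel, Nat.sub_self, pow_zero, Nat.factorial_zero, Nat.cast_one,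
      div_one, one_mul, mul_one]
    refine if_congr ?_ rfl rfl
    constructor
    · rintro ⟨h1, h2, h3, h4, h5⟩
      exact ⟨h1, h2, h4, h3, by rw [Nat.add_comm]; exact h5⟩
    · rintro ⟨h1, h2, h3, h4, h5⟩
      exact ⟨h1, h2, h4, h3, by rw [Nat.add_comm]; exact h5⟩
  have hC : PowerSeries.coeff n (Dser k) =
      ∑ u1 ∈ range (n+1), ∑ v1 ∈ range (n+1), ∑ u2 ∈ range (n+1), ∑ v2 ∈ range (n+1),
        if 0 < u1 ∧ u1 = u2 ∧ 0 < v1 ∧ 0 < v2 ∧ u1 * v1 + u2 * v2 = n then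
          (v2 : ℚ) ^ k / (Nat.factorial k : ℚ) else 0 := by
    rw [Dser, PowerSeries.coeff_mk, ← diag_eq k n hk]
    refine Finset.sum_congr rfl fun u1 hu1 => Finset.sum_congr rfl fun v1 _ => ?_
    -- collapse u2 sum on RHS side
    have hpt : ∀ u2 ∈ range (n+1), ∀ v2,
        (if 0 < u1 ∧ u1 = u2 ∧ 0 < v1 ∧ 0 < v2 ∧ u1 * v1 + u2 * v2 = n then
          (v2 : ℚ) ^ k / (Nat.factorial k : ℚ) else 0)
        = if u2 = u1 then
            (if 0 < u1 ∧ 0 < v1 ∧ 0 < v2 ∧ u1 * v1 + u1 * v2 = n then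
              (v2 : ℚ) ^ k / (Nat.factorial k : ℚ) else 0) else 0 := by
      intro u2 _ v2
      by_cases h : u2 = u1
      · subst h
        rw [if_pos rfl]
        refine if_congr ?_ rfl rfl
        tauto
      · rw [if_neg h, if_neg]
        rintro ⟨-, h2, -⟩
        exact h h2.symm
    calc (∑ v2 ∈ range (n+1),
            if 0 < u1 ∧ 0 < v1 ∧ 0 < v2 ∧ u1 * v1 + u1 * v2 = n then
              (v2 : ℚ) ^ k / (Nat.factorial k : ℚ) else 0)
        = ∑ u2 ∈ range (n+1), ∑ v2 ∈ range (n+1),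
            if u2 = u1 then
              (if 0 < u1 ∧ 0 < v1 ∧ 0 < v2 ∧ u1 * v1 + u1 * v2 = n then
                (v2 : ℚ) ^ k / (Nat.factorial k : ℚ) else 0) else 0 := by
          rw [Finset.sum_comm]
          rw [Finset.sum_congr rfl (fun v2 _ => Finset.sum_ite_eq' (range (n+1)) u1 _)]
          exact Finset.sum_congr rfl fun v2 _ => (if_pos hu1).symm
      _ = _ := by
          refine Finset.sum_congr rfl fun u2 hu2 => Finset.sum_congr rfl fun v2 _ => ?_
          exact (hpt u2 hu2 v2).symm
  rw [hA, hB, hC]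
  rw [← Finset.sum_add_distrib, ← Finset.sum_add_distrib]
  refine Finset.sum_congr rfl fun u1 _ => ?_
  rw [← Finset.sum_add_distrib, ← Finset.sum_add_distrib]
  refine Finset.sum_congr rfl fun v1 _ => ?_
  rw [← Finset.sum_add_distrib, ← Finset.sum_add_distrib]
  refine Finset.sum_congr rfl fun u2 _ => ?_
  rw [← Finset.sum_add_distrib, ← Finset.sum_add_distrib]
  refine Finset.sum_congr rfl fun v2 _ => ?_
  exact trisplit u1 u2 (0 < v1) (0 < v2) (u1 * v1 + u2 * v2 = n)
    ((v2 : ℚ) ^ k / (Nat.factorial k : ℚ))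


noncomputable def acoef (k i : ℕ) : ℚ :=
  bernoulli i * ((k+1).choose i : ℚ) * ((k+1-i).factorial : ℚ)
    / (((k:ℚ)+1) * (k.factorial : ℚ))

lemma Dser_eq (k : ℕ) :
    Dser k = ∑ i ∈ range (k+1), acoef k i • g (k+2-i) := by
  ext n
  rw [Dser, PowerSeries.coeff_mk, map_sum]
  have hfac : ∀ i : ℕ, ((k+1-i).factorial : ℚ) ≠ 0 :=
    fun i => Nat.cast_ne_zero.mpr (Nat.factorial_ne_zero _)
  have hkfac : ((k.factorial : ℚ)) ≠ 0 := Nat.cast_ne_zero.mpr (Nat.factorial_ne_zero _)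
  have hk1 : ((k:ℚ)+1) ≠ 0 := by positivity
  calc (∑ u ∈ n.divisors, ∑ v ∈ range (n / u), (v : ℚ) ^ k / (Nat.factorial k : ℚ))
      = ∑ u ∈ n.divisors, ∑ i ∈ range (k+1),
          bernoulli i * ((k+1).choose i : ℚ) * ((n/u : ℕ) : ℚ) ^ (k+1-i) / ((k:ℚ)+1)
            / (Nat.factorial k : ℚ) := by
        refine Finset.sum_congr rfl fun u _ => ?_
        rw [← Finset.sum_div, sum_range_pow, Finset.sum_div]
    _ = ∑ i ∈ range (k+1), ∑ u ∈ n.divisors,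
          bernoulli i * ((k+1).choose i : ℚ) * ((n/u : ℕ) : ℚ) ^ (k+1-i) / ((k:ℚ)+1)
            / (Nat.factorial k : ℚ) := Finset.sum_comm
    _ = ∑ i ∈ range (k+1), PowerSeries.coeff n (acoef k i • g (k+2-i)) := by
        refine Finset.sum_congr rfl fun i hi => ?_
        rw [Finset.mem_range] at hi
        rw [PowerSeries.coeff_smul, coeff_g, smul_eq_mul, Finset.mul_sum]
        refine Finset.sum_congr rfl fun u _ => ?_
        have he : k + 2 - i - 1 = k + 1 - i := by omega
        rw [he, acoef]
        field_simp

/-- `d̂ g_k − 2k (g^sh_{1,k+1} + g^sh_{k+1,1} + g_{k+2} − g₁ g_{k+1})` is a ℚ-linear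
combination of the `g_m` with `m ≤ k+1`; here `d̂ g_k = k g^{(1)}_{k+1}` and
`g^sh_{1,k+1} = g_{1,k+1} + (1/2)(g^{(1)}_{k+1} − g_{k+1})`, `g^sh_{k+1,1} = g_{k+1,1}`. -/
theorem stmt_16 (k : ℕ) (hk : 1 ≤ k) :
    ∃ c : ℕ → ℚ,
      (k : ℚ) • gb 1 (k + 1)
        - (2 * (k : ℚ)) • (g2 1 (k + 1) + (1/2 : ℚ) • (gb 1 (k + 1) - g (k + 1))
            + g2 (k + 1) 1 + g (k + 2) - g 1 * g (k + 1)) =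
      ∑ m ∈ Finset.Icc 1 (k + 1), c m • g m := by
  refine ⟨fun m => (if m = k+1 then (k:ℚ) else 0)
    + (if 2 ≤ m then (2*(k:ℚ)) * acoef k (k+2-m) else 0), ?_⟩
  have h1 : (k : ℚ) • gb 1 (k + 1)
        - (2 * (k : ℚ)) • (g2 1 (k + 1) + (1/2 : ℚ) • (gb 1 (k + 1) - g (k + 1))
            + g2 (k + 1) 1 + g (k + 2) - g 1 * g (k + 1))
      = (k:ℚ) • g (k+1) - (2*(k:ℚ)) • g (k+2) + (2*(k:ℚ)) • Dser k := by
    rw [mul_g_decomp k hk]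
    module
  rw [h1, Dser_eq k, Finset.smul_sum]
  simp only [smul_smul]
  rw [Finset.sum_range_succ']
  have ha0 : acoef k 0 = 1 := by
    have hfs : (((k+1).factorial : ℕ) : ℚ) = ((k:ℚ)+1) * (k.factorial : ℚ) := by
      rw [Nat.factorial_succ]; push_cast; ring
    have hne : ((k:ℚ)+1) * (k.factorial : ℚ) ≠ 0 := by
      have : ((k.factorial : ℕ) : ℚ) ≠ 0 := Nat.cast_ne_zero.mpr (Nat.factorial_ne_zero _)
      positivity
    simp only [acoef, bernoulli_zero, Nat.choose_zero_right, Nat.cast_one, one_mul, mul_one,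
      Nat.sub_zero, Nat.add_sub_cancel]
    rw [hfs]
    exact div_self hne
  have hSL : ∀ i ∈ range k,
      (2*(k:ℚ) * acoef k (i+1)) • g (k+2-(i+1))
        = (2*(k:ℚ) * acoef k (i+1)) • g (k+1-i) := by
    intro i hi
    rw [Finset.mem_range] at hi
    have : k + 2 - (i+1) = k+1-i := by omega
    rw [this]
  rw [Finset.sum_congr rfl hSL, ha0, mul_one]
  have hmain : (k:ℚ) • g (k+1) - (2*(k:ℚ)) • g (k+2)
      + (∑ i ∈ range k, (2*(k:ℚ) * acoef k (i+1)) • g (k+1-i) + (2*(k:ℚ)) • g (k+2))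
      = (k:ℚ) • g (k+1) + ∑ i ∈ range k, (2*(k:ℚ) * acoef k (i+1)) • g (k+1-i) := by
    module
  simp only [Nat.sub_zero]
  rw [hmain]
  -- split the RHS sum
  have hsplit : ∀ m ∈ Finset.Icc 1 (k+1),
      ((if m = k+1 then (k:ℚ) else 0)
        + (if 2 ≤ m then (2*(k:ℚ)) * acoef k (k+2-m) else 0)) • g m
      = (if m = k+1 then (k:ℚ) • g m else 0)
        + (if 2 ≤ m then ((2*(k:ℚ)) * acoef k (k+2-m)) • g m else 0) := by
    intro m _
    rw [add_smul]
    congr 1 <;> split_ifs <;> simp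
  rw [Finset.sum_congr rfl hsplit, Finset.sum_add_distrib]
  congr 1
  · rw [Finset.sum_ite_eq' (Finset.Icc 1 (k+1)) (k+1)]
    rw [if_pos (Finset.mem_Icc.mpr ⟨by omega, le_refl _⟩)]
  · rw [show Finset.Icc 1 (k+1) = insert 1 (Finset.Icc 2 (k+1)) from by
      ext m; simp only [Finset.mem_Icc, Finset.mem_insert]; omega]
    rw [Finset.sum_insert (by simp)]
    rw [if_neg (by omega), zero_add]
    refine Finset.sum_nbij' (fun i => k+1-i) (fun m => k+1-m) ?_ ?_ ?_ ?_ ?_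
    · intro i hi; rw [Finset.mem_range] at hi; simp only [Finset.mem_Icc]; omega
    · intro m hm; simp only [Finset.mem_Icc] at hm; rw [Finset.mem_range]; omega
    · intro i hi; rw [Finset.mem_range] at hi; omega
    · intro m hm; simp only [Finset.mem_Icc] at hm; omega
    · intro i hi; rw [Finset.mem_range] at hi
      rw [if_pos (show 2 ≤ k+1-i by omega)]
      have he : k + 2 - (k+1-i) = i+1 := by omega
      rw [he]
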